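/- arXiv:2001.06906 — 7 statements merged into one kernel-verified Lean document; each statement's English description precedes it below -/
import Mathlib

section
/- Let I be an interval, let f : I → ℝ be a nonzero continuous P-class function that is monotone decreasing on I, and let λ < 0. Then for all x, y ∈ I with x < y such that (1−λ)x + λy ∈ I, one has f((1−λ)x + λy) ≥ f(x) − f(y). -/
/-- Lemma 2.3: if `f` is a nonzero continuous P-class function that is decreasing on an
interval `I` and `λ < 0`, then `f((1−λ)x + λy) ≥ f(x) − f(y)` for `x < y` in `I` with
`(1−λ)x + λy ∈ I`. -/
theorem P_class_decreasing_lemma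
    (I : Set ℝ) (hI : I.OrdConnected)
    (f : ℝ → ℝ) (hf_cont : ContinuousOn f I)
    (hf_P : ∀ x ∈ I, ∀ y ∈ I, ∀ l ∈ Set.Icc (0 : ℝ) 1,
      f (l * x + (1 - l) * y) ≤ f x + f y)
    (hf_ne : ∃ z ∈ I, f z ≠ 0)
    (hf_dec : AntitoneOn f I)
    (l : ℝ) (hl : l < 0) :
    ∀ x ∈ I, ∀ y ∈ I, x < y → (1 - l) * x + l * y ∈ I →
      f x - f y ≤ f ((1 - l) * x + l * y) := by
  intro x hx y hy hxy hz
  set z := (1 - l) * x + l * y with hzdef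
  have h1l : (0:ℝ) < 1 - l := by linarith
  have hμ : (1 : ℝ) / (1 - l) ∈ Set.Icc (0:ℝ) 1 := by
    constructor
    · positivity
    · rw [div_le_one h1l]; linarith
  have key := hf_P z hz y hy _ hμ
  have heq : (1 / (1 - l)) * z + (1 - 1 / (1 - l)) * y = x := by
    field_simp [hzdef]
    linear_combination hzdef
  rw [heq] at key
  linarith
end

section
/- Let m < M be real numbers, let f : [m, M] → ℝ be a continuous monotone decreasing P-class function, and let C be a bounded self-adjoint operator on a complex Hilbert space H with mI ≤ C ≤ MI. Let x ∈ H and u ∈ ℝ satisfy 0 < ⟨x, x⟩ < u, let a ∈ [m, M] satisfy a ≤ ⟨Cx, x⟩ / ⟨x, x⟩, and suppose (ua − ⟨Cx, x⟩)/(u − ⟨x, x⟩) ∈ [m, M]. Then f((ua − ⟨Cx, x⟩)/(u − ⟨x, x⟩)) ≥ f(a) − 2⟨f(C)x, x⟩ / ⟨x, x⟩. -/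
open scoped InnerProductSpace

/-- Theorem 2.5: for a continuous decreasing P-class function `f` on `[m, M]` and a
self-adjoint operator `C` with `mI ≤ C ≤ MI`, if `0 < ⟨x, x⟩ < u`, `a ∈ [m, M]` with
`a ≤ ⟨Cx, x⟩/⟨x, x⟩` and `(ua − ⟨Cx, x⟩)/(u − ⟨x, x⟩) ∈ [m, M]`, then
`f((ua − ⟨Cx, x⟩)/(u − ⟨x, x⟩)) ≥ f(a) − 2⟨f(C)x, x⟩/⟨x, x⟩`. -/
theorem P_class_decreasing_operator_ineq
    {H : Type*} [NormedAddCommGroup H] [InnerProductSpace ℂ H] [CompleteSpace H]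
    (m M : ℝ) (hmM : m < M)
    (f : ℝ → ℝ) (hf_cont : ContinuousOn f (Set.Icc m M))
    (hf_P : ∀ x ∈ Set.Icc m M, ∀ y ∈ Set.Icc m M, ∀ l ∈ Set.Icc (0 : ℝ) 1,
      f (l * x + (1 - l) * y) ≤ f x + f y)
    (hf_dec : AntitoneOn f (Set.Icc m M))
    (C : H →L[ℂ] H) (hC : IsSelfAdjoint C)
    (hCm : algebraMap ℝ (H →L[ℂ] H) m ≤ C)
    (hCM : C ≤ algebraMap ℝ (H →L[ℂ] H) M)
    (x : H) (u : ℝ) (hx : 0 < (⟪x, x⟫_ℂ).re) (hxu : (⟪x, x⟫_ℂ).re < u)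
    (a : ℝ) (ha : a ∈ Set.Icc m M)
    (ha' : a ≤ (⟪C x, x⟫_ℂ).re / (⟪x, x⟫_ℂ).re)
    (hmem : (u * a - (⟪C x, x⟫_ℂ).re) / (u - (⟪x, x⟫_ℂ).re) ∈ Set.Icc m M) :
    f a - 2 * (⟪(cfc f C) x, x⟫_ℂ).re / (⟪x, x⟫_ℂ).re ≤
      f ((u * a - (⟪C x, x⟫_ℂ).re) / (u - (⟪x, x⟫_ℂ).re)) := by
  set p := (⟪x, x⟫_ℂ).re with hp
  set c := (⟪C x, x⟫_ℂ).re with hc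
  -- f is nonnegative on [m, M]
  have hf0 : ∀ s ∈ Set.Icc m M, 0 ≤ f s := by
    intro s hs
    have := hf_P s hs s hs (1/2) (by norm_num)
    have h2 : (1/2 : ℝ) * s + (1 - 1/2) * s = s := by ring
    rw [h2] at this
    linarith
  -- spectrum of C lies in [m, M]
  have hspec : spectrum ℝ C ⊆ Set.Icc m M := by
    intro t ht
    exact ⟨(algebraMap_le_iff_le_spectrum hC).mp hCm t ht,
      (le_algebraMap_iff_spectrum_le hC).mp hCM t ht⟩
  -- hence cfc f C is a nonnegative operator
  have hcfc : (0 : H →L[ℂ] H) ≤ cfc f C :=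
    cfc_nonneg (fun t ht => hf0 t (hspec ht))
  have hpos : ((cfc f C) - 0).IsPositive := (ContinuousLinearMap.le_def 0 _).mp hcfc
  rw [sub_zero] at hpos
  have hinner : 0 ≤ (⟪(cfc f C) x, x⟫_ℂ).re := (Complex.le_def.mp (hpos.inner_nonneg_left x)).1
  -- b ≤ a
  have hup : 0 < u - p := by linarith
  have hac : a * p ≤ c := (le_div_iff₀ hx).mp ha'
  have hba : (u * a - c) / (u - p) ≤ a := by
    rw [div_le_iff₀ hup]
    nlinarith
  have hfab : f a ≤ f ((u * a - c) / (u - p)) := hf_dec hmem ha hba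
  have h2 : 0 ≤ 2 * (⟪(cfc f C) x, x⟫_ℂ).re / p := by positivity
  linarith
end

section
/- Let m < M be real numbers, let f : [m, M] → ℝ be a continuous monotone increasing P-class function, and let C be a bounded self-adjoint operator on a complex Hilbert space H with mI ≤ C ≤ MI. Let x ∈ H and u ∈ ℝ satisfy 0 < ⟨x, x⟩ < u, let a ∈ [m, M] satisfy ⟨Cx, x⟩ / ⟨x, x⟩ ≤ a, and suppose (ua − ⟨Cx, x⟩)/(u − ⟨x, x⟩) ∈ [m, M]. Then f((ua − ⟨Cx, x⟩)/(u − ⟨x, x⟩)) ≥ f(⟨Cx, x⟩ / ⟨x, x⟩) − f(a). -/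
open scoped InnerProductSpace

/-- Corollary 2.6: for a continuous increasing P-class function `f` on `[m, M]` and a
self-adjoint operator `C` with `mI ≤ C ≤ MI`, if `0 < ⟨x, x⟩ < u`, `a ∈ [m, M]` with
`⟨Cx, x⟩/⟨x, x⟩ ≤ a` and `(ua − ⟨Cx, x⟩)/(u − ⟨x, x⟩) ∈ [m, M]`, then
`f((ua − ⟨Cx, x⟩)/(u − ⟨x, x⟩)) ≥ f(⟨Cx, x⟩/⟨x, x⟩) − f(a)`. -/
theorem P_class_increasing_operator_ineq
    {H : Type*} [NormedAddCommGroup H] [InnerProductSpace ℂ H] [CompleteSpace H]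
    (m M : ℝ) (hmM : m < M)
    (f : ℝ → ℝ) (hf_cont : ContinuousOn f (Set.Icc m M))
    (hf_P : ∀ x ∈ Set.Icc m M, ∀ y ∈ Set.Icc m M, ∀ l ∈ Set.Icc (0 : ℝ) 1,
      f (l * x + (1 - l) * y) ≤ f x + f y)
    (hf_inc : MonotoneOn f (Set.Icc m M))
    (C : H →L[ℂ] H) (hC : IsSelfAdjoint C)
    (hCm : algebraMap ℝ (H →L[ℂ] H) m ≤ C)
    (hCM : C ≤ algebraMap ℝ (H →L[ℂ] H) M)
    (x : H) (u : ℝ) (hx : 0 < (⟪x, x⟫_ℂ).re) (hxu : (⟪x, x⟫_ℂ).re < u)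
    (a : ℝ) (ha : a ∈ Set.Icc m M)
    (ha' : (⟪C x, x⟫_ℂ).re / (⟪x, x⟫_ℂ).re ≤ a)
    (hmem : (u * a - (⟪C x, x⟫_ℂ).re) / (u - (⟪x, x⟫_ℂ).re) ∈ Set.Icc m M) :
    f ((⟪C x, x⟫_ℂ).re / (⟪x, x⟫_ℂ).re) - f a ≤
      f ((u * a - (⟪C x, x⟫_ℂ).re) / (u - (⟪x, x⟫_ℂ).re)) := by
  set p := (⟪x, x⟫_ℂ).re with hp
  set c := (⟪C x, x⟫_ℂ).re with hc
  set s := (u * a - c) / (u - p) with hs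
  -- m ≤ c / p
  have hpos := (ContinuousLinearMap.le_def _ _).mp hCm
  have h1 : 0 ≤ ((⟪(C - algebraMap ℝ (H →L[ℂ] H) m) x, x⟫_ℂ)).re :=
    (Complex.le_def.mp (hpos.inner_nonneg_left x)).1
  have h2 : ((⟪(C - algebraMap ℝ (H →L[ℂ] H) m) x, x⟫_ℂ)).re = c - m * p := by
    have e1 : (algebraMap ℝ (H →L[ℂ] H) m) x = (m : ℂ) • x := by
      rw [Algebra.algebraMap_eq_smul_one, ContinuousLinearMap.smul_apply,
        ContinuousLinearMap.one_apply, ← algebraMap_smul ℂ m x]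
      rfl
    rw [ContinuousLinearMap.sub_apply, inner_sub_left, e1, inner_smul_left,
      Complex.conj_ofReal]
    simp [hp, hc]
  have hmc : m * p ≤ c := by rw [h2] at h1; linarith
  have hmt : m ≤ c / p := (le_div_iff₀ hx).mpr (by linarith)
  have htmem : c / p ∈ Set.Icc m M := ⟨hmt, ha'.trans ha.2⟩
  -- f (c/p) ≤ f a
  have h3 : f (c / p) ≤ f a := hf_inc htmem ha ha'
  -- 0 ≤ f s
  have h4 := hf_P s hmem s hmem 1 ⟨zero_le_one, le_refl 1⟩
  simp at h4
  linarith
end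

section
/- Let m < M be real numbers, let C be a bounded self-adjoint operator on a complex Hilbert space H whose spectrum is contained in [m, M], and let f : [m, M] → ℝ be a continuous P-class function. Then for every x ∈ H with ‖x‖ = 1, one has ⟨f(C)x, x⟩ ≤ f(m) + f(M). -/
open scoped InnerProductSpace

/-- Theorem 2.7: for a bounded self-adjoint operator `C` with spectrum in `[m, M]` and a
continuous P-class function `f` on `[m, M]`, every unit vector `x` satisfies
`⟨f(C)x, x⟩ ≤ f(m) + f(M)`. -/
theorem P_class_upper_bound
    {H : Type*} [NormedAddCommGroup H] [InnerProductSpace ℂ H] [CompleteSpace H]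
    (m M : ℝ) (hmM : m < M)
    (C : H →L[ℂ] H) (hC : IsSelfAdjoint C)
    (hspec : spectrum ℝ C ⊆ Set.Icc m M)
    (f : ℝ → ℝ) (hf_cont : ContinuousOn f (Set.Icc m M))
    (hf_P : ∀ x ∈ Set.Icc m M, ∀ y ∈ Set.Icc m M, ∀ l ∈ Set.Icc (0 : ℝ) 1,
      f (l * x + (1 - l) * y) ≤ f x + f y)
    (x : H) (hx : ‖x‖ = 1) :
    (⟪(cfc f C) x, x⟫_ℂ).re ≤ f m + f M := by
  have hMm : (0:ℝ) < M - m := by linarith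
  have hle : cfc f C ≤ cfc (fun _ : ℝ => f m + f M) C := by
    apply cfc_mono
    · intro t ht
      have htI : t ∈ Set.Icc m M := hspec ht
      set l : ℝ := (M - t) / (M - m) with hl
      have hl0 : 0 ≤ l := div_nonneg (by linarith [htI.2]) hMm.le
      have hl1 : l ≤ 1 := by
        rw [div_le_one hMm]; linarith [htI.1]
      have key := hf_P m (Set.left_mem_Icc.mpr hmM.le) M (Set.right_mem_Icc.mpr hmM.le) l
        ⟨hl0, hl1⟩
      have heq : l * m + (1 - l) * M = t := by
        field_simp [hl]
        have h3 : l * (M - m) = M - t := by rw [hl]; exact div_mul_cancel₀ _ hMm.ne'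
        linear_combination -h3
      rwa [heq] at key
    · exact hf_cont.mono hspec
    · exact continuousOn_const
  rw [cfc_const (f m + f M) C] at hle
  have hpos := (ContinuousLinearMap.le_def _ _).mp hle
  have h0 := hpos.inner_nonneg_left x
  have hcalc : ((algebraMap ℝ (H →L[ℂ] H)) (f m + f M)) x = (f m + f M) • x := by
    simp [Algebra.algebraMap_eq_smul_one]
  have hxx : ⟪x, x⟫_ℂ = 1 := by
    rw [inner_self_eq_norm_sq_to_K, hx]; norm_num
  rw [ContinuousLinearMap.sub_apply, inner_sub_left, hcalc, RCLike.real_smul_eq_coe_smul (K := ℂ), inner_smul_left, hxx] at h0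
  simp only [map_sub, smul_eq_mul, mul_one, Complex.real_smul] at h0
  have h1 : RCLike.re (((f m + f M : ℝ) : ℂ)) = f m + f M := by simp
  simp only [RCLike.conj_ofReal] at h0
  have h2 : RCLike.re ⟪(cfc f C) x, x⟫_ℂ = (⟪(cfc f C) x, x⟫_ℂ).re := rfl
  rw [← h2, ← h1]
  have h3 := (Complex.le_def.mp h0).1
  simp only [Complex.zero_re, Complex.sub_re] at h3
  exact sub_nonneg.mp h3
end

section
/- Let m < M be real numbers, let C be a bounded self-adjoint operator on a complex Hilbert space H whose spectrum is contained in [m, M], and let f : [m, M] → ℝ be a continuous P-class function with f(t) > 0 for all t ∈ [m, M]. Then for every x ∈ H with ‖x‖ = 1, one has 2⟨f(C)x, x⟩ ≤ λ · f(⟨Cx, x⟩), where λ = 2(f(m) + f(M)) / (min over t ∈ [m, M] of f(t)). -/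
open scoped InnerProductSpace

lemma inner_re_mono {H : Type*} [NormedAddCommGroup H] [InnerProductSpace ℂ H]
    [CompleteSpace H] {A B : H →L[ℂ] H} (h : A ≤ B) (x : H) :
    (⟪A x, x⟫_ℂ).re ≤ (⟪B x, x⟫_ℂ).re := by
  rw [ContinuousLinearMap.le_def] at h
  have := h.inner_nonneg_left x
  simp only [ContinuousLinearMap.sub_apply, inner_sub_left, map_sub,
    RCLike.re_to_complex] at this
  have h2 := (Complex.le_def.mp this).1
  simp only [Complex.zero_re, Complex.sub_re] at h2
  linarith

lemma inner_algebraMap_re {H : Type*} [NormedAddCommGroup H] [InnerProductSpace ℂ H]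
    [CompleteSpace H] (r : ℝ) (x : H) (hx : ‖x‖ = 1) :
    (⟪(algebraMap ℝ (H →L[ℂ] H) r) x, x⟫_ℂ).re = r := by
  rw [Algebra.algebraMap_eq_smul_one, ← algebraMap_smul ℂ r (1 : H →L[ℂ] H)]
  simp only [ContinuousLinearMap.smul_apply, ContinuousLinearMap.one_apply]
  rw [show (algebraMap ℝ ℂ) r • x = (r : ℂ) • x from rfl, inner_smul_left]
  simp [inner_self_eq_norm_sq_to_K, hx, Complex.conj_ofReal]

/-- Corollary 2.10(i): for `C` self-adjoint with spectrum in `[m, M]` and `f` a continuous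
positive P-class function on `[m, M]`, every unit vector `x` satisfies
`2⟨f(C)x, x⟩ ≤ λ f(⟨Cx, x⟩)` where `λ = 2(f(m) + f(M)) / min_{t ∈ [m, M]} f(t)`. -/
theorem P_class_ratio_bound
    {H : Type*} [NormedAddCommGroup H] [InnerProductSpace ℂ H] [CompleteSpace H]
    (m M : ℝ) (hmM : m < M)
    (C : H →L[ℂ] H) (hC : IsSelfAdjoint C)
    (hspec : spectrum ℝ C ⊆ Set.Icc m M)
    (f : ℝ → ℝ) (hf_cont : ContinuousOn f (Set.Icc m M))
    (hf_P : ∀ x ∈ Set.Icc m M, ∀ y ∈ Set.Icc m M, ∀ l ∈ Set.Icc (0 : ℝ) 1,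
      f (l * x + (1 - l) * y) ≤ f x + f y)
    (hf_pos : ∀ t ∈ Set.Icc m M, 0 < f t)
    (x : H) (hx : ‖x‖ = 1) :
    2 * (⟪(cfc f C) x, x⟫_ℂ).re ≤
      (2 * (f m + f M) / sInf (f '' Set.Icc m M)) * f (⟪C x, x⟫_ℂ).re := by
  have hm : m ∈ Set.Icc m M := Set.left_mem_Icc.mpr hmM.le
  have hM : M ∈ Set.Icc m M := Set.right_mem_Icc.mpr hmM.le
  -- every value of f on [m,M] is at most f m + f M
  have hub : ∀ t ∈ Set.Icc m M, f t ≤ f m + f M := by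
    intro t ht
    have hMm : 0 < M - m := sub_pos.mpr hmM
    set l : ℝ := (M - t) / (M - m) with hl
    have hl0 : 0 ≤ l := div_nonneg (by linarith [ht.2]) hMm.le
    have hl1 : l ≤ 1 := by
      rw [div_le_one hMm]; linarith [ht.1]
    have key : l * m + (1 - l) * M = t := by
      rw [hl, div_mul_eq_mul_div, one_sub_div hMm.ne', div_mul_eq_mul_div, ← add_div,
        div_eq_iff hMm.ne']
      ring
    have := hf_P m hm M hM l ⟨hl0, hl1⟩
    rwa [key] at this
  -- the infimum
  set μ := sInf (f '' Set.Icc m M) with hμ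
  have hcpt : IsCompact (f '' Set.Icc m M) := (isCompact_Icc).image_of_continuousOn hf_cont
  have hne : (f '' Set.Icc m M).Nonempty := ⟨f m, ⟨m, hm, rfl⟩⟩
  have hμmem : μ ∈ f '' Set.Icc m M := hcpt.sInf_mem hne
  obtain ⟨t₀, ht₀, ht₀eq⟩ := hμmem
  have hμpos : 0 < μ := ht₀eq ▸ hf_pos t₀ ht₀
  have hμle : ∀ t ∈ Set.Icc m M, μ ≤ f t := fun t ht =>
    csInf_le hcpt.bddBelow ⟨t, ht, rfl⟩
  -- continuity of f on the spectrum
  have hf_cont' : ContinuousOn f (spectrum ℝ C) := hf_cont.mono hspec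
  -- ⟨Cx,x⟩.re ∈ [m,M]
  have hCle : C ≤ algebraMap ℝ (H →L[ℂ] H) M :=
    le_algebraMap_of_spectrum_le (fun r hr => (hspec hr).2)
  have hCge : algebraMap ℝ (H →L[ℂ] H) m ≤ C :=
    algebraMap_le_of_le_spectrum (fun r hr => (hspec hr).1)
  have hmem : (⟪C x, x⟫_ℂ).re ∈ Set.Icc m M := by
    constructor
    · have := inner_re_mono hCge x
      rwa [inner_algebraMap_re m x hx] at this
    · have := inner_re_mono hCle x
      rwa [inner_algebraMap_re M x hx] at this
  -- ⟨f(C)x,x⟩.re ≤ f m + f M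
  have hfCle : cfc f C ≤ algebraMap ℝ (H →L[ℂ] H) (f m + f M) := by
    refine le_algebraMap_of_spectrum_le (fun r hr => ?_)
    rw [cfc_map_spectrum f C] at hr
    obtain ⟨s, hs, rfl⟩ := hr
    exact hub s (hspec hs)
  have h1 : (⟪(cfc f C) x, x⟫_ℂ).re ≤ f m + f M := by
    have := inner_re_mono hfCle x
    rwa [inner_algebraMap_re (f m + f M) x hx] at this
  -- conclude
  have hfmM : 0 < f m + f M := add_pos (hf_pos m hm) (hf_pos M hM)
  have h2 : μ ≤ f (⟪C x, x⟫_ℂ).re := hμle _ hmem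
  calc 2 * (⟪(cfc f C) x, x⟫_ℂ).re ≤ 2 * (f m + f M) := by linarith
    _ = (2 * (f m + f M) / μ) * μ := by field_simp
    _ ≤ (2 * (f m + f M) / μ) * f (⟪C x, x⟫_ℂ).re := by
        apply mul_le_mul_of_nonneg_left h2
        positivity
end

section
/- Let m < M be real numbers, let C be a bounded self-adjoint operator on a complex Hilbert space H whose spectrum is contained in [m, M], and let f : [m, M] → ℝ be a continuous P-class function. Then for every x ∈ H with ‖x‖ = 1, one has 2⟨f(C)x, x⟩ − f(⟨Cx, x⟩) ≤ 2(f(m) + f(M)) − (min over t ∈ [m, M] of f(t)). -/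
open scoped InnerProductSpace

/-- Corollary 2.10(ii): for `C` self-adjoint with spectrum in `[m, M]` and `f` a
continuous P-class function on `[m, M]`, every unit vector `x` satisfies
`2⟨f(C)x, x⟩ − f(⟨Cx, x⟩) ≤ 2(f(m) + f(M)) − min_{t ∈ [m, M]} f(t)`. -/
theorem P_class_difference_bound
    {H : Type*} [NormedAddCommGroup H] [InnerProductSpace ℂ H] [CompleteSpace H]
    (m M : ℝ) (hmM : m < M)
    (C : H →L[ℂ] H) (hC : IsSelfAdjoint C)
    (hspec : spectrum ℝ C ⊆ Set.Icc m M)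
    (f : ℝ → ℝ) (hf_cont : ContinuousOn f (Set.Icc m M))
    (hf_P : ∀ x ∈ Set.Icc m M, ∀ y ∈ Set.Icc m M, ∀ l ∈ Set.Icc (0 : ℝ) 1,
      f (l * x + (1 - l) * y) ≤ f x + f y)
    (x : H) (hx : ‖x‖ = 1) :
    2 * (⟪(cfc f C) x, x⟫_ℂ).re - f (⟪C x, x⟫_ℂ).re ≤
      2 * (f m + f M) - sInf (f '' Set.Icc m M) := by
  have hxx : (⟪x, x⟫_ℂ).re = 1 := by
    rw [inner_self_eq_norm_sq_to_K (𝕜 := ℂ)]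
    simp [hx]
  -- generic fact: A ≤ B implies re⟪A x, x⟫ ≤ re⟪B x, x⟫
  have key : ∀ (A B : H →L[ℂ] H), A ≤ B → (⟪A x, x⟫_ℂ).re ≤ (⟪B x, x⟫_ℂ).re := by
    intro A B hAB
    have hpos := (ContinuousLinearMap.le_def A B).mp hAB
    have := hpos.2 x
    rw [ContinuousLinearMap.reApplyInnerSelf_apply, ContinuousLinearMap.sub_apply,
      inner_sub_left] at this
    simp only [map_sub, RCLike.re_to_complex] at this
    linarith
  -- f t ≤ f m + f M on [m, M]
  have hf_bound : ∀ t ∈ Set.Icc m M, f t ≤ f m + f M := by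
    intro t ht
    have hMm : (0:ℝ) < M - m := by linarith
    have hl : (M - t) / (M - m) ∈ Set.Icc (0:ℝ) 1 := by
      constructor
      · apply div_nonneg (by linarith [ht.2]) hMm.le
      · rw [div_le_one hMm]; linarith [ht.1]
    have := hf_P m (Set.left_mem_Icc.mpr hmM.le) M (Set.right_mem_Icc.mpr hmM.le) _ hl
    have heq : (M - t) / (M - m) * m + (1 - (M - t) / (M - m)) * M = t := by
      field_simp
      ring
    rwa [heq] at this
  -- spectrum facts
  have hf_cont' : ContinuousOn f (spectrum ℝ C) := hf_cont.mono hspec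
  -- 1. ⟪C x, x⟫.re ∈ [m, M]
  have h1 : algebraMap ℝ (H →L[ℂ] H) m ≤ C :=
    algebraMap_le_of_le_spectrum (fun t ht => (hspec ht).1) hC
  have h2 : C ≤ algebraMap ℝ (H →L[ℂ] H) M :=
    le_algebraMap_of_spectrum_le (fun t ht => (hspec ht).2) hC
  have halg : ∀ r : ℝ, (⟪(algebraMap ℝ (H →L[ℂ] H) r) x, x⟫_ℂ).re = r := by
    intro r
    rw [Algebra.algebraMap_eq_smul_one]
    simp only [ContinuousLinearMap.smul_apply, ContinuousLinearMap.one_apply]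
    rw [RCLike.real_smul_eq_coe_smul (K := ℂ) r x, inner_smul_left]
    simp [Complex.mul_re, hxx, hx]
  have hCx_mem : (⟪C x, x⟫_ℂ).re ∈ Set.Icc m M := by
    constructor
    · have := key _ _ h1; rwa [halg] at this
    · have := key _ _ h2; rwa [halg] at this
  -- 2. cfc f C ≤ (f m + f M) • 1
  have h3 : cfc f C ≤ algebraMap ℝ (H →L[ℂ] H) (f m + f M) :=
    cfc_le_algebraMap f (f m + f M) C (fun t ht => hf_bound t (hspec ht)) hf_cont' hC
  have hfC : (⟪(cfc f C) x, x⟫_ℂ).re ≤ f m + f M := by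
    have := key _ _ h3; rwa [halg] at this
  -- 3. sInf ≤ f ⟪Cx,x⟫
  have hbdd : BddBelow (f '' Set.Icc m M) :=
    (isCompact_Icc.image_of_continuousOn hf_cont).bddBelow
  have hinf : sInf (f '' Set.Icc m M) ≤ f (⟪C x, x⟫_ℂ).re :=
    csInf_le hbdd ⟨_, hCx_mem, rfl⟩
  linarith
end

section
/- Let m < M be real numbers, let C₁, …, Cₙ be bounded self-adjoint operators on a complex Hilbert space H with the spectrum of each Cᵢ contained in [m, M], let x₁, …, xₙ ∈ H satisfy Σᵢ ‖xᵢ‖² = 1, and let f : [m, M] → ℝ be a continuous P-class function. Then Σᵢ ⟨f(Cᵢ)xᵢ, xᵢ⟩ ≤ f(m) + f(M). -/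
open scoped InnerProductSpace

/-- Theorem 3.5: for self-adjoint operators `C₁, …, Cₙ` with spectra in `[m, M]`,
vectors `x₁, …, xₙ` with `Σᵢ ‖xᵢ‖² = 1`, and a continuous P-class function `f` on
`[m, M]`, one has `Σᵢ ⟨f(Cᵢ)xᵢ, xᵢ⟩ ≤ f(m) + f(M)`. -/
theorem multi_P_class_upper_bound
    {H : Type*} [NormedAddCommGroup H] [InnerProductSpace ℂ H] [CompleteSpace H]
    (m M : ℝ) (hmM : m < M) (n : ℕ)
    (C : Fin n → H →L[ℂ] H) (hC : ∀ i, IsSelfAdjoint (C i))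
    (hspec : ∀ i, spectrum ℝ (C i) ⊆ Set.Icc m M)
    (x : Fin n → H) (hx : ∑ i, ‖x i‖ ^ 2 = 1)
    (f : ℝ → ℝ) (hf_cont : ContinuousOn f (Set.Icc m M))
    (hf_P : ∀ x ∈ Set.Icc m M, ∀ y ∈ Set.Icc m M, ∀ l ∈ Set.Icc (0 : ℝ) 1,
      f (l * x + (1 - l) * y) ≤ f x + f y) :
    ∑ i, (⟪(cfc f (C i)) (x i), x i⟫_ℂ).re ≤ f m + f M := by
  set K := f m + f M with hK
  have hfK : ∀ t ∈ Set.Icc m M, f t ≤ K := by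
    intro t ht
    obtain ⟨ht1, ht2⟩ := ht
    set l := (M - t) / (M - m) with hl
    have hMm : (0:ℝ) < M - m := by linarith
    have hl0 : 0 ≤ l := div_nonneg (by linarith) hMm.le
    have hl1 : l ≤ 1 := by
      rw [div_le_one hMm]; linarith
    have heq : l * m + (1 - l) * M = t := by
      field_simp [hl]
      have hlM : l * (M - m) = M - t := by rw [hl]; exact div_mul_cancel₀ _ hMm.ne'
      linear_combination -hlM
    have := hf_P m ⟨le_refl m, hmM.le⟩ M ⟨hmM.le, le_refl M⟩ l ⟨hl0, hl1⟩
    rwa [heq] at this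
  -- each term bound
  have key : ∀ i, (⟪(cfc f (C i)) (x i), x i⟫_ℂ).re ≤ K * ‖x i‖ ^ 2 := by
    intro i
    have hcont : ContinuousOn f (spectrum ℝ (C i)) := hf_cont.mono (hspec i)
    have hle : cfc f (C i) ≤ cfc (fun _ : ℝ => K) (C i) :=
      cfc_mono (fun t ht => hfK t (hspec i ht)) hcont continuousOn_const
    have hpos := (ContinuousLinearMap.le_def _ _).mp hle
    have hnn := hpos.inner_nonneg_left (x i)
    rw [cfc_const K (C i) (hC i)] at hnn
    replace hnn := (Complex.nonneg_iff.mp hnn).1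
    have hrw : (⟪((algebraMap ℝ (H →L[ℂ] H)) K - cfc f (C i)) (x i), x i⟫_ℂ).re
        = K * ‖x i‖ ^ 2 - (⟪(cfc f (C i)) (x i), x i⟫_ℂ).re := by
      rw [ContinuousLinearMap.sub_apply, inner_sub_left, Complex.sub_re,
        Algebra.algebraMap_eq_smul_one, ContinuousLinearMap.smul_apply,
        ContinuousLinearMap.one_apply,
        show (K • x i : H) = (K : ℂ) • x i from (algebraMap_smul ℂ K (x i)).symm,
        inner_smul_left, inner_self_eq_norm_sq_to_K, Complex.conj_ofReal]
      simp [← Complex.ofReal_pow]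
    rw [hrw] at hnn
    linarith
  calc ∑ i, (⟪(cfc f (C i)) (x i), x i⟫_ℂ).re ≤ ∑ i, K * ‖x i‖ ^ 2 :=
        Finset.sum_le_sum fun i _ => key i
    _ = K * ∑ i, ‖x i‖ ^ 2 := by rw [Finset.mul_sum]
    _ = K := by rw [hx, mul_one]
end
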